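/- For every integer m ≥ 3 and every real number t with |t| < 1, one has the convergent expansion Γ(1+m, arcsinh t) = m! − (m!/2^{m+1}) Σ_{k=m}^∞ Q(m+1, k−m; 3) (2t)^{k+1}/(k+1)!, where Γ(a, x) = ∫_x^∞ e^{−u} u^{a−1} du is the upper incomplete gamma function and arcsinh t = ln(t + √(1+t²)) is the inverse hyperbolic sine. -/

import Mathlib

/-- Signed Stirling numbers of the first kind: coefficients of the falling factorial,
`x(x-1)⋯(x-n+1) = ∑ₖ s(n,k) xᵏ`. -/
def stirlingFirst : ℕ → ℕ → ℤ
  | 0, 0 => 1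
  | 0, _ + 1 => 0
  | n + 1, 0 => -(n : ℤ) * stirlingFirst n 0
  | n + 1, k + 1 => stirlingFirst n k - (n : ℤ) * stirlingFirst n (k + 1)

/-- `Q m k α = ∑_{ℓ=0}^{k} C(m+ℓ−1, m−1) · s(m+k−1, m+ℓ−1) · ((m+k−α)/2)^ℓ`. -/
noncomputable def Q (m k : ℕ) (α : ℝ) : ℝ :=
  ∑ ℓ ∈ Finset.range (k + 1),
    ((m + ℓ - 1).choose (m - 1) : ℝ) * (stirlingFirst (m + k - 1) (m + ℓ - 1) : ℝ) *
      (((m : ℝ) + (k : ℝ) - α) / 2) ^ ℓ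

/-- The upper incomplete gamma function `Γ(a, x) = ∫_x^∞ e^{−u} u^{a−1} du`
(for a positive integer value of the parameter `a`). -/
noncomputable def incGamma (a : ℕ) (x : ℝ) : ℝ :=
  ∫ u in Set.Ioi x, Real.exp (-u) * u ^ (a - 1)

namespace IG
open Polynomial Finset

noncomputable def P (n : ℕ) : Polynomial ℝ := ∏ i ∈ Finset.range n, (X - C (i:ℝ))

lemma P_coeff (n : ℕ) : ∀ j, (P n).coeff j = (stirlingFirst n j : ℝ) := by
  induction n with
  | zero =>
    intro j
    cases j with
    | zero => simp [P, stirlingFirst]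
    | succ j => simp [P, stirlingFirst, Polynomial.coeff_one]
  | succ n ih =>
    intro j
    have hP : P (n+1) = P n * (X - C (n:ℝ)) := by rw [P, Finset.prod_range_succ]; rfl
    have hsplit : P n * (X - C (n:ℝ)) = P n * X - C (n:ℝ) * P n := by ring
    cases j with
    | zero =>
      rw [hP, mul_coeff_zero]
      simp [ih 0, stirlingFirst]
      push_cast
      ring
    | succ j =>
      rw [hP, hsplit, coeff_sub, coeff_mul_X, coeff_C_mul, ih, ih]
      simp only [stirlingFirst]
      push_cast
      ring

lemma natDegree_P_le (n : ℕ) : (P n).natDegree ≤ n := by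
  refine le_trans (Polynomial.natDegree_prod_le _ _) ?_
  calc ∑ i ∈ Finset.range n, (X - C (i:ℝ)).natDegree
      ≤ ∑ _i ∈ Finset.range n, 1 := by
        refine Finset.sum_le_sum fun i _ => ?_
        exact le_of_eq (Polynomial.natDegree_X_sub_C _)
    _ = n := by simp

noncomputable def A (n : ℕ) : Polynomial ℝ :=
  ∏ i ∈ Finset.range n, (X + C ((n:ℝ) - 2 - 2*i))

lemma natDegree_A_le (n : ℕ) : (A n).natDegree ≤ n := by
  refine le_trans (Polynomial.natDegree_prod_le _ _) ?_
  calc ∑ i ∈ Finset.range n, (X + C ((n:ℝ) - 2 - 2*i)).natDegree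
      ≤ ∑ _i ∈ Finset.range n, 1 := by
        refine Finset.sum_le_sum fun i _ => ?_
        exact le_of_eq (Polynomial.natDegree_X_add_C _)
    _ = n := by simp

lemma A_coeff_eq_Q (m k : ℕ) :
    (A (m+k)).coeff m = Q (m+1) k 3 * 2^k := by
  set n := m + k with hn
  set β : ℝ := ((n:ℝ) - 2)/2 with hβ
  have hmn : m ≤ n := Nat.le_add_right m k
  -- Step 1 : A coeff as subset sums
  have h1 : (A n).coeff m
      = ∑ T ∈ (Finset.range n).powersetCard (n - m), ∏ i ∈ T, ((n:ℝ) - 2 - 2*i) := by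
    have := Finset.prod_X_add_C_coeff (Finset.range n)
      (fun i => ((n:ℝ) - 2 - 2*(i:ℕ))) (k := m) (by simpa using hmn)
    simpa [A, Finset.card_range] using this
  -- Step 2 : taylor coeff as subset sums
  have h2 : (Polynomial.taylor β (P n)).coeff m
      = ∑ T ∈ (Finset.range n).powersetCard (n - m), ∏ i ∈ T, (β - (i:ℕ)) := by
    have hT : Polynomial.taylor β (P n) = ∏ i ∈ Finset.range n, (X + C (β - (i:ℕ))) := by
      rw [Polynomial.taylor_apply, P, Polynomial.prod_comp]
      refine Finset.prod_congr rfl fun i _ => ?_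
      simp [Polynomial.sub_comp, Polynomial.X_comp, Polynomial.C_comp, map_sub]
      ring
    rw [hT]
    have := Finset.prod_X_add_C_coeff (Finset.range n)
      (fun i => (β - (i:ℕ))) (k := m) (by simpa using hmn)
    simpa [Finset.card_range] using this
  -- Step 3 : relate the two subset sums
  have h3 : (A n).coeff m = 2^(n-m) * (Polynomial.taylor β (P n)).coeff m := by
    rw [h1, h2, Finset.mul_sum]
    refine Finset.sum_congr rfl fun T hT => ?_
    have hcard : T.card = n - m := (Finset.mem_powersetCard.mp hT).2
    rw [← hcard, ← Finset.prod_const (2:ℝ), ← Finset.prod_mul_distrib]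
    refine Finset.prod_congr rfl fun i _ => ?_
    rw [hβ]; push_cast; ring
  -- Step 4 : taylor coeff equals the Q sum
  have h4 : (Polynomial.taylor β (P n)).coeff m
      = ∑ ℓ ∈ Finset.range (k+1), ((m+ℓ).choose m : ℝ) * (stirlingFirst n (m+ℓ) : ℝ) * β^ℓ := by
    rw [Polynomial.taylor_coeff]
    have hdeg : (Polynomial.hasseDeriv m (P n)).natDegree < k + 1 := by
      have h1 := Polynomial.natDegree_hasseDeriv_le (P n) m
      have h2 := natDegree_P_le n
      omega
    rw [Polynomial.eval_eq_sum_range' hdeg]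
    refine Finset.sum_congr rfl fun ℓ _ => ?_
    rw [Polynomial.hasseDeriv_coeff, P_coeff]
    push_cast
    rw [Nat.add_comm ℓ m]
  -- Step 5 : Q equals that sum
  have h5 : Q (m+1) k 3 = ∑ ℓ ∈ Finset.range (k+1),
      ((m+ℓ).choose m : ℝ) * (stirlingFirst n (m+ℓ) : ℝ) * β^ℓ := by
    unfold Q
    refine Finset.sum_congr rfl fun ℓ _ => ?_
    have e1 : m + 1 + ℓ - 1 = m + ℓ := by omega
    have e2 : m + 1 - 1 = m := by omega
    have e3 : m + 1 + k - 1 = n := by omega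
    rw [e1, e2, e3]
    have e4 : (((m+1:ℕ) : ℝ) + (k:ℝ) - 3)/2 = β := by
      rw [hβ, hn]; push_cast; ring
    rw [e4]
  rw [h3, h4, ← h5]
  have : n - m = k := by omega
  rw [this]
  ring


lemma A_zero : A 0 = 1 := by simp [A]

lemma A_one : A 1 = X + C (-1 : ℝ) := by
  unfold A
  rw [Finset.prod_range_one]
  norm_num

lemma A_rec (n : ℕ) : A (n+2) = A n * (X * X - 2 * X - C ((n:ℝ)*((n:ℝ)+2))) := by
  have key : A (n+2)
      = ((∏ i ∈ Finset.range n, (X + C ((n:ℝ) - 2 - 2*(i:ℕ))))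
          * (X + C (-(n:ℝ)-2))) * (X + C (n:ℝ)) := by
    unfold A
    rw [Finset.prod_range_succ', Finset.prod_range_succ]
    congr 2
    · refine Finset.prod_congr rfl fun i _ => ?_
      congr 1
      push_cast
      ring
    · congr 1
      push_cast
      ring
    · congr 1
      push_cast
      ring
  rw [key]
  have e1 : (C (-(n:ℝ)-2) : ℝ[X]) = -(C (n:ℝ)) - 2 := by
    rw [show (-(n:ℝ)-2) = -((n:ℝ)+2) by ring, C_neg, C_add, map_ofNat]
    ring
  have e2 : (C ((n:ℝ)*((n:ℝ)+2)) : ℝ[X]) = C (n:ℝ) * (C (n:ℝ) + 2) := by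
    rw [C_mul, C_add, map_ofNat]
  rw [e1, e2]
  unfold A
  ring

noncomputable def E (j n : ℕ) : ℝ := (j.factorial : ℝ) * (A n).coeff j

lemma coeff_A_rec (n : ℕ) (jj : ℕ) : (A (n+2)).coeff jj =
    (A n * X * X).coeff jj - 2*(A n * X).coeff jj - (n:ℝ)*((n:ℝ)+2)*(A n).coeff jj := by
  rw [A_rec n]
  rw [show A n * (X*X - 2*X - C ((n:ℝ)*((n:ℝ)+2)))
      = A n * X * X - (C 2) * (A n * X) - C ((n:ℝ)*((n:ℝ)+2)) * A n by
    rw [map_ofNat]; ring]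
  rw [coeff_sub, coeff_sub, coeff_C_mul, coeff_C_mul]

lemma E_rec (j n : ℕ) :
    E j (n+2) = -((n:ℝ)*((n:ℝ)+2)) * E j n - 2*(j:ℝ)* E (j-1) n
      + (j:ℝ)*((j:ℝ)-1) * E (j-2) n := by
  match j with
  | 0 =>
    unfold E
    rw [coeff_A_rec]
    simp [Polynomial.coeff_mul_X_zero]
  | 1 =>
    unfold E
    rw [coeff_A_rec]
    have h1 : (A n * X * X).coeff 1 = (A n * X).coeff 0 := Polynomial.coeff_mul_X _ _
    rw [h1, Polynomial.coeff_mul_X_zero, Polynomial.coeff_mul_X]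
    simp
    ring
  | (jj+2) =>
    unfold E
    rw [coeff_A_rec]
    have h1 : (A n * X * X).coeff (jj+2) = (A n).coeff jj := by
      rw [show jj + 2 = (jj+1) + 1 by ring, Polynomial.coeff_mul_X, Polynomial.coeff_mul_X]
    have h2 : (A n * X).coeff (jj+2) = (A n).coeff (jj+1) := by
      rw [show jj + 2 = (jj+1) + 1 by ring, Polynomial.coeff_mul_X]
    rw [h1, h2]
    simp only [Nat.add_sub_cancel, show jj + 2 - 1 = jj + 1 by omega]
    rw [Nat.factorial_succ (jj+1), Nat.factorial_succ jj]
    push_cast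
    ring

noncomputable def K (n : ℕ) : ℝ := ∏ i ∈ Finset.range n, max 1 |(n:ℝ) - 2 - 2*(i:ℕ)|

lemma one_le_prod_max (s : Finset ℕ) (c : ℕ → ℝ) : 1 ≤ ∏ i ∈ s, max 1 |c i| := by
  have := Finset.prod_le_prod (s := s) (f := fun _ => (1:ℝ)) (g := fun i => max 1 |c i|)
    (fun i _ => zero_le_one) (fun i _ => le_max_left _ _)
  simpa using this

lemma one_le_K (n : ℕ) : 1 ≤ K n := one_le_prod_max _ _

lemma K_rec (n : ℕ) : K (n+2) = (K n * ((n:ℝ)+2)) * max 1 (n:ℝ) := by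
  unfold K
  rw [Finset.prod_range_succ', Finset.prod_range_succ]
  congr 2
  · refine Finset.prod_congr rfl fun i _ => ?_
    congr 2
    push_cast
    ring
  · rw [show ((n+2:ℕ):ℝ) - 2 - 2*(((n+1):ℕ):ℝ) = -((n:ℝ)+2) by push_cast; ring]
    rw [abs_neg, abs_of_nonneg (by positivity)]
    exact max_eq_right (by linarith [Nat.cast_nonneg (α := ℝ) n])
  · congr 1
    rw [show ((n+2:ℕ):ℝ) - 2 - 2*((0:ℕ):ℝ) = (n:ℝ) by push_cast; ring]
    exact abs_of_nonneg (by positivity)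

lemma K_le : ∀ n, K n ≤ (n.factorial : ℝ) := by
  have base0 : K 0 ≤ (Nat.factorial 0 : ℝ) := by simp [K]
  have base1 : K 1 ≤ (Nat.factorial 1 : ℝ) := by
    simp [K, Finset.prod_range_one]
    norm_num
  intro n
  induction n using Nat.strong_induction_on with
  | _ n ih =>
    match n with
    | 0 => exact base0
    | 1 => exact base1
    | (n+2) =>
      rw [K_rec]
      have h1 : K n ≤ (n.factorial : ℝ) := ih n (by omega)
      have h2 : max 1 (n:ℝ) ≤ (n:ℝ)+1 := by
        apply max_le <;> [linarith [Nat.cast_nonneg (α := ℝ) n]; linarith]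
      calc K n * ((n:ℝ)+2) * max 1 (n:ℝ)
          ≤ (n.factorial : ℝ) * ((n:ℝ)+2) * ((n:ℝ)+1) := by
            have hK0 : (0:ℝ) ≤ K n := le_trans zero_le_one (one_le_K n)
            apply mul_le_mul
            · apply mul_le_mul h1 (le_refl _) (by positivity) (by positivity)
            · exact h2
            · exact le_trans zero_le_one (le_max_left _ _)
            · positivity
        _ = ((n+2).factorial : ℝ) := by
            rw [Nat.factorial_succ (n+1), Nat.factorial_succ n]
            push_cast
            ring

lemma abs_coeff_A_le (n j : ℕ) : |(A n).coeff j| ≤ (n.choose j : ℝ) * K n := by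
  by_cases hj : j ≤ n
  · have h1 : (A n).coeff j
        = ∑ T ∈ (Finset.range n).powersetCard (n - j), ∏ i ∈ T, ((n:ℝ) - 2 - 2*(i:ℕ)) := by
      have := Finset.prod_X_add_C_coeff (Finset.range n)
        (fun i => ((n:ℝ) - 2 - 2*(i:ℕ))) (k := j) (by simpa using hj)
      simpa [A, Finset.card_range] using this
    rw [h1]
    calc |∑ T ∈ (Finset.range n).powersetCard (n - j), ∏ i ∈ T, ((n:ℝ) - 2 - 2*(i:ℕ))|
        ≤ ∑ T ∈ (Finset.range n).powersetCard (n - j), |∏ i ∈ T, ((n:ℝ) - 2 - 2*(i:ℕ))| :=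
          Finset.abs_sum_le_sum_abs _ _
      _ ≤ ∑ _T ∈ (Finset.range n).powersetCard (n - j), K n := by
          refine Finset.sum_le_sum fun T hT => ?_
          have hTsub : T ⊆ Finset.range n := (Finset.mem_powersetCard.mp hT).1
          rw [Finset.abs_prod]
          calc ∏ i ∈ T, |(n:ℝ) - 2 - 2*(i:ℕ)|
              ≤ ∏ i ∈ T, max 1 |(n:ℝ) - 2 - 2*(i:ℕ)| := by
                refine Finset.prod_le_prod (fun i _ => abs_nonneg _) fun i _ => le_max_right _ _
            _ ≤ K n := by
                unfold K
                rw [← Finset.prod_sdiff hTsub]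
                refine le_mul_of_one_le_left ?_ (one_le_prod_max _ _)
                exact Finset.prod_nonneg fun i _ => le_trans zero_le_one (le_max_left _ _)
      _ = ((Finset.range n).powersetCard (n - j)).card * K n := by
          rw [Finset.sum_const, nsmul_eq_mul]
      _ = (n.choose j : ℝ) * K n := by
          rw [Finset.card_powersetCard, Finset.card_range, Nat.choose_symm hj]
  · rw [Polynomial.coeff_eq_zero_of_natDegree_lt (lt_of_le_of_lt (natDegree_A_le n) (by omega))]
    simp
    exact mul_nonneg (by positivity) (le_trans zero_le_one (one_le_K n))

lemma abs_E_le (j n : ℕ) : |E j n| ≤ ((n:ℝ)+1)^j * (n.factorial : ℝ) := by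
  unfold E
  rw [abs_mul, abs_of_nonneg (by positivity : (0:ℝ) ≤ (j.factorial:ℝ))]
  calc (j.factorial:ℝ) * |(A n).coeff j|
      ≤ (j.factorial:ℝ) * ((n.choose j : ℝ) * K n) := by
        apply mul_le_mul_of_nonneg_left (abs_coeff_A_le n j) (by positivity)
    _ ≤ (j.factorial:ℝ) * ((n.choose j : ℝ) * (n.factorial : ℝ)) := by
        apply mul_le_mul_of_nonneg_left _ (by positivity)
        apply mul_le_mul_of_nonneg_left (K_le n) (by positivity)
    _ = ((n.descFactorial j : ℝ)) * (n.factorial : ℝ) := by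
        rw [Nat.descFactorial_eq_factorial_mul_choose]
        push_cast
        ring
    _ ≤ ((n:ℝ)+1)^j * (n.factorial : ℝ) := by
        apply mul_le_mul_of_nonneg_right _ (by positivity)
        calc ((n.descFactorial j : ℝ)) ≤ ((n^j : ℕ) : ℝ) := by
              exact_mod_cast Nat.descFactorial_le_pow n j
          _ ≤ ((n:ℝ)+1)^j := by
              push_cast
              apply pow_le_pow_left₀ (by positivity) (by linarith)


open Real


lemma summable_aux (p : ℕ) {r : ℝ} (h0 : 0 < r) (hr : r < 1) :
    Summable (fun n : ℕ => ((n:ℝ)+1)^p * r^n) := by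
  have h : Summable (fun n : ℕ => (n:ℝ)^p * r^n) := by
    have := summable_pow_mul_geometric_of_norm_lt_one (R := ℝ) p
      (r := r) (by rwa [Real.norm_eq_abs, abs_of_pos h0])
    simpa using this
  have h2 : Summable (fun n : ℕ => ((n+1:ℕ):ℝ)^p * r^(n+1)) :=
    (summable_nat_add_iff 1).mpr h
  have h3 := h2.mul_left (1/r)
  refine h3.congr fun n => ?_
  push_cast
  field_simp
  ring

lemma summable_poly (b : ℕ → ℝ) (Cc : ℝ) (p : ℕ) (hb : ∀ n, |b n| ≤ Cc * ((n:ℝ)+1)^p)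
    {y : ℝ} (hy : |y| < 1) : Summable fun n => b n * y^n := by
  have hC : 0 ≤ Cc := by
    have := le_trans (abs_nonneg (b 0)) (hb 0)
    simpa using this
  set r : ℝ := (|y|+1)/2 with hrdef
  have h0 : 0 < r := by positivity
  have hr : r < 1 := by rw [hrdef]; linarith
  have hyr : |y| ≤ r := by rw [hrdef]; linarith
  refine Summable.of_norm ?_
  refine Summable.of_nonneg_of_le (fun n => norm_nonneg _) (fun n => ?_)
    ((summable_aux p h0 hr).mul_left Cc)
  rw [norm_mul, norm_pow]
  calc ‖b n‖ * ‖y‖^n ≤ (Cc * ((n:ℝ)+1)^p) * r^n := by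
        apply mul_le_mul (hb n) (pow_le_pow_left₀ (norm_nonneg _) hyr n) (by positivity)
          (by positivity)
    _ = Cc * (((n:ℝ)+1)^p * r^n) := by ring

lemma summable_poly_deriv (b : ℕ → ℝ) (Cc : ℝ) (p : ℕ)
    (hb : ∀ n, |b n| ≤ Cc * ((n:ℝ)+1)^p) {y : ℝ} (hy : |y| < 1) :
    Summable fun n => b n * ((n:ℝ) * y^(n-1)) := by
  have hC : 0 ≤ Cc := by
    have := le_trans (abs_nonneg (b 0)) (hb 0)
    simpa using this
  set r : ℝ := (|y|+1)/2 with hrdef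
  have h0 : 0 < r := by positivity
  have hr : r < 1 := by rw [hrdef]; linarith
  have hyr : |y| ≤ r := by rw [hrdef]; linarith
  have hu : Summable (fun n : ℕ => ((n:ℝ)+1)^(p+1) * r^(n-1)) := by
    rw [← summable_nat_add_iff 1]
    refine Summable.of_nonneg_of_le (fun n => by positivity) (fun n => ?_)
      ((summable_aux (p+1) h0 hr).mul_left (2^(p+1)))
    have hle : ((n+1:ℕ):ℝ)+1 ≤ 2*((n:ℝ)+1) := by push_cast; linarith [Nat.cast_nonneg (α := ℝ) n]
    calc (((n+1:ℕ):ℝ)+1)^(p+1) * r^((n+1)-1)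
        ≤ (2*((n:ℝ)+1))^(p+1) * r^n := by
          apply mul_le_mul_of_nonneg_right _ (by positivity)
          exact pow_le_pow_left₀ (by positivity) hle _
      _ = 2^(p+1) * (((n:ℝ)+1)^(p+1) * r^n) := by rw [mul_pow]; ring
  refine Summable.of_norm ?_
  refine Summable.of_nonneg_of_le (fun n => norm_nonneg _) (fun n => ?_) (hu.mul_left Cc)
  rw [norm_mul, norm_mul, norm_pow]
  calc ‖b n‖ * (‖(n:ℝ)‖ * ‖y‖^(n-1))
      ≤ (Cc * ((n:ℝ)+1)^p) * (((n:ℝ)+1) * r^(n-1)) := by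
        apply mul_le_mul (hb n) _ (by positivity) (by positivity)
        apply mul_le_mul _ _ (by positivity) (by positivity)
        · rw [Real.norm_eq_abs, abs_of_nonneg (Nat.cast_nonneg n)]; linarith
        · exact pow_le_pow_left₀ (norm_nonneg _) hyr _
    _ = Cc * (((n:ℝ)+1)^(p+1) * r^(n-1)) := by ring

lemma hasDerivAt_tsum_poly (b : ℕ → ℝ) (Cc : ℝ) (p : ℕ)
    (hb : ∀ n, |b n| ≤ Cc * ((n:ℝ)+1)^p) {t : ℝ} (ht : |t| < 1) :
    HasDerivAt (fun y => ∑' n, b n * y^n) (∑' n, b n * ((n:ℝ) * t^(n-1))) t := by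
  have hC : 0 ≤ Cc := by
    have := le_trans (abs_nonneg (b 0)) (hb 0)
    simpa using this
  set r : ℝ := (|t|+1)/2 with hrdef
  have h0 : 0 < r := by positivity
  have hr : r < 1 := by rw [hrdef]; linarith
  have htr : |t| < r := by rw [hrdef]; linarith
  have hu : Summable (fun n : ℕ => Cc * (((n:ℝ)+1)^(p+1) * r^(n-1))) := by
    apply Summable.mul_left
    rw [← summable_nat_add_iff 1]
    refine Summable.of_nonneg_of_le (fun n => by positivity) (fun n => ?_)
      ((summable_aux (p+1) h0 hr).mul_left (2^(p+1)))
    have hle : ((n+1:ℕ):ℝ)+1 ≤ 2*((n:ℝ)+1) := by push_cast; linarith [Nat.cast_nonneg (α := ℝ) n]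
    calc (((n+1:ℕ):ℝ)+1)^(p+1) * r^((n+1)-1)
        ≤ (2*((n:ℝ)+1))^(p+1) * r^n := by
          apply mul_le_mul_of_nonneg_right _ (by positivity)
          exact pow_le_pow_left₀ (by positivity) hle _
      _ = 2^(p+1) * (((n:ℝ)+1)^(p+1) * r^n) := by rw [mul_pow]; ring
  have habs : -r < t ∧ t < r := abs_lt.mp htr
  refine hasDerivAt_tsum_of_isPreconnected hu isOpen_Ioo
    (convex_Ioo (-r) r).isPreconnected
    (g := fun (n : ℕ) (y : ℝ) => b n * y^n)
    (g' := fun (n : ℕ) (y : ℝ) => b n * ((n:ℝ) * y^(n-1)))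
    (fun n y _ => (hasDerivAt_pow n y).const_mul (b n))
    (fun n y hy => ?_) (show (0:ℝ) ∈ Set.Ioo (-r) r by constructor <;> linarith)
    ?_ (show t ∈ Set.Ioo (-r) r from ⟨habs.1, habs.2⟩)
  · have hyr : |y| ≤ r := by
      rcases hy with ⟨h1, h2⟩
      rw [abs_le]; exact ⟨le_of_lt h1, le_of_lt h2⟩
    rw [Real.norm_eq_abs, abs_mul, abs_mul]
    calc |b n| * (|(n:ℝ)| * |y^(n-1)|)
        ≤ (Cc * ((n:ℝ)+1)^p) * (((n:ℝ)+1) * r^(n-1)) := by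
          apply mul_le_mul (hb n) _ (by positivity) (by positivity)
          apply mul_le_mul _ _ (by positivity) (by positivity)
          · rw [abs_of_nonneg (Nat.cast_nonneg n)]; linarith
          · rw [abs_pow]
            exact pow_le_pow_left₀ (abs_nonneg _) hyr _
      _ = Cc * (((n:ℝ)+1)^(p+1) * r^(n-1)) := by ring
  · apply summable_of_ne_finset_zero (s := {0})
    intro n hn
    have : n ≠ 0 := by simpa using hn
    simp [zero_pow this]

lemma tsum_shift {f : ℕ → ℝ} (h0 : f 0 = 0) : ∑' n, f n = ∑' n, f (n+1) := by
  by_cases h : Summable f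
  · rw [h.tsum_eq_zero_add, h0, zero_add]
  · have h2 : ¬ Summable (fun n => f (n+1)) := fun hs => h ((summable_nat_add_iff 1).mp hs)
    rw [tsum_eq_zero_of_not_summable h, tsum_eq_zero_of_not_summable h2]

lemma const_of_deriv_zero_Ioo {f : ℝ → ℝ} (hf : ∀ y ∈ Set.Ioo (-1:ℝ) 1, HasDerivAt f 0 y)
    {t : ℝ} (ht : t ∈ Set.Ioo (-1:ℝ) 1) : f t = f 0 := by
  rcases le_or_gt 0 t with h | h
  · have key := eq_of_has_deriv_right_eq (a := 0) (b := t) (f' := fun _ => (0:ℝ)) (f := f)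
      (g := fun _ => f 0)
      (fun x hx => (hf x ⟨by linarith [hx.1], by linarith [hx.2, ht.2]⟩).hasDerivWithinAt)
      (fun x _ => (hasDerivAt_const x (f 0)).hasDerivWithinAt)
      (fun x hx => (hf x ⟨by linarith [hx.1], lt_of_le_of_lt hx.2 ht.2⟩).continuousAt.continuousWithinAt)
      continuousOn_const rfl
    exact key t ⟨h, le_refl t⟩
  · have key := eq_of_has_deriv_right_eq (a := t) (b := 0) (f' := fun _ => (0:ℝ)) (f := f)
      (g := fun _ => f t)
      (fun x hx => (hf x ⟨by linarith [hx.1, ht.1], by linarith [hx.2]⟩).hasDerivWithinAt)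
      (fun x _ => (hasDerivAt_const x (f t)).hasDerivWithinAt)
      (fun x hx => (hf x ⟨by linarith [hx.1, ht.1], by linarith [hx.2]⟩).continuousAt.continuousWithinAt)
      continuousOn_const rfl
    have := key 0 ⟨le_of_lt h, le_refl 0⟩
    exact this.symm


noncomputable def rr (t : ℝ) : ℝ := Real.sqrt (1 + t^2)

lemma rr_pos (t : ℝ) : 0 < rr t := Real.sqrt_pos.mpr (by positivity)

lemma rr_sq (t : ℝ) : rr t ^ 2 = 1 + t^2 := Real.sq_sqrt (by positivity)

lemma hasDerivAt_rr (t : ℝ) : HasDerivAt rr (t / rr t) t := by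
  have h1 : HasDerivAt (fun y : ℝ => 1 + y^2) (2*t) t := by
    simpa using ((hasDerivAt_pow 2 t).const_add 1)
  have h2 := (Real.hasDerivAt_sqrt (by positivity : (1:ℝ)+t^2 ≠ 0)).comp t h1
  have h0 := (rr_pos t).ne'
  refine h2.congr_deriv ?_
  unfold rr at *
  field_simp

noncomputable def pp (t : ℝ) : ℝ := 1 - t / rr t

lemma hasDerivAt_pp (t : ℝ) : HasDerivAt pp (-((rr t)⁻¹^3)) t := by
  have h := ((hasDerivAt_id t).div (hasDerivAt_rr t) (ne_of_gt (rr_pos t)))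
  have h2 := h.const_sub 1
  refine h2.congr_deriv ?_
  have hr := rr_sq t
  have h0 := (rr_pos t).ne'
  field_simp
  simp only [id]
  linear_combination (-1:ℝ) * hr

lemma hasDerivAt_arsinh' (t : ℝ) : HasDerivAt Real.arsinh ((rr t)⁻¹) t :=
  Real.hasDerivAt_arsinh t

noncomputable def gfun (j : ℕ) (t : ℝ) : ℝ := (arsinh t)^j * pp t

noncomputable def G1 (j : ℕ) (t : ℝ) : ℝ :=
  (j:ℝ) * (arsinh t)^(j-1) * (rr t)⁻¹ * pp t - (arsinh t)^j * (rr t)⁻¹^3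

lemma hasDerivAt_gfun (j : ℕ) (t : ℝ) : HasDerivAt (gfun j) (G1 j t) t := by
  have hpow := (hasDerivAt_arsinh' t).pow j
  have h := hpow.mul (hasDerivAt_pp t)
  refine h.congr_deriv ?_
  unfold G1
  simp only [Pi.pow_apply]
  ring

noncomputable def G2 (j : ℕ) (t : ℝ) : ℝ :=
  (j:ℝ)*((j-1:ℕ):ℝ)*(arsinh t)^(j-2)*(rr t)⁻¹^2*pp t
  - (j:ℝ)*t*(arsinh t)^(j-1)*(rr t)⁻¹^3*pp t
  - 2*(j:ℝ)*(arsinh t)^(j-1)*(rr t)⁻¹^4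
  + 3*t*(arsinh t)^j*(rr t)⁻¹^5

lemma hasDerivAt_G1 (j : ℕ) (t : ℝ) : HasDerivAt (G1 j) (G2 j t) t := by
  have h0 := (rr_pos t).ne'
  have hrinv : HasDerivAt (fun y => (rr y)⁻¹) (-t * (rr t)⁻¹^3) t := by
    have := (hasDerivAt_rr t).inv h0
    refine this.congr_deriv ?_
    field_simp
  have h1a : HasDerivAt (fun y => arsinh y^(j-1)) (((j-1:ℕ):ℝ) * arsinh t^(j-2) * (rr t)⁻¹) t := by
    have := (hasDerivAt_arsinh' t).pow (j-1)
    exact this.congr_deriv rfl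
  have h1 := ((h1a.const_mul (j:ℝ)).mul hrinv).mul (hasDerivAt_pp t)
  have h3 : HasDerivAt (fun y => (rr y)⁻¹^3) (3*(rr t)⁻¹^2 * (-t * (rr t)⁻¹^3)) t := by
    have := hrinv.pow 3
    exact this.congr_deriv (by norm_num)
  have h2 := (hasDerivAt_arsinh' t).pow j |>.mul h3
  have htot := h1.sub h2
  refine htot.congr_deriv ?_
  unfold G2
  simp only [Pi.mul_apply, Pi.pow_apply]
  ring

lemma g_ode (j : ℕ) (t : ℝ) :
    (1+t^2) * G2 j t + 3*t*G1 j t + 2*(j:ℝ)*gfun (j-1) t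
      - (j:ℝ)*((j:ℝ)-1)*gfun (j-2) t = 0 := by
  have hr2 := rr_sq t
  have h0 := (rr_pos t).ne'
  have key : (rr t - t)*(rr t + t) = 1 := by linear_combination hr2
  rw [← hr2]
  match j with
  | 0 =>
    unfold G2 G1 gfun pp
    norm_num
    field_simp
    ring
  | 1 =>
    unfold G2 G1 gfun pp
    norm_num
    field_simp
    linear_combination (2*rr t) * hr2
  | (jj+2) =>
    unfold G2 G1 gfun pp
    have e1 : jj + 2 - 1 = jj + 1 := by omega
    have e2 : jj + 2 - 2 = jj := by omega
    rw [e1, e2]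
    push_cast
    field_simp
    linear_combination ((2*(jj:ℝ)+4) * arsinh t^(jj+1) * rr t) * hr2

noncomputable def bE (j n : ℕ) : ℝ := E j n / n.factorial

lemma abs_bE_le (j : ℕ) : ∀ n, |bE j n| ≤ 1 * ((n:ℝ)+1)^j := by
  intro n
  unfold bE
  rw [abs_div, abs_of_nonneg (a := (n.factorial:ℝ)) (by positivity), one_mul,
    div_le_iff₀ (by positivity)]
  exact abs_E_le j n

noncomputable def b1 (j n : ℕ) : ℝ := bE j (n+1) * ((n:ℝ)+1)

lemma abs_b1_le (j : ℕ) : ∀ n, |b1 j n| ≤ 2^j * ((n:ℝ)+1)^(j+1) := by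
  intro n
  unfold b1
  rw [abs_mul, abs_of_nonneg (a := ((n:ℝ)+1)) (by positivity)]
  have h1 : |bE j (n+1)| ≤ (((n+1:ℕ):ℝ)+1)^j := by
    simpa using abs_bE_le j (n+1)
  have h2 : (((n+1:ℕ):ℝ)+1)^j ≤ 2^j * ((n:ℝ)+1)^j := by
    rw [← mul_pow]
    apply pow_le_pow_left₀ (by positivity)
    push_cast
    linarith [Nat.cast_nonneg (α := ℝ) n]
  calc |bE j (n+1)| * ((n:ℝ)+1) ≤ (2^j * ((n:ℝ)+1)^j) * ((n:ℝ)+1) := by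
        apply mul_le_mul (le_trans h1 h2) (le_refl _) (by positivity) (by positivity)
    _ = 2^j * ((n:ℝ)+1)^(j+1) := by ring

noncomputable def F (j : ℕ) (y : ℝ) : ℝ := ∑' n, bE j n * y^n
noncomputable def F1 (j : ℕ) (y : ℝ) : ℝ := ∑' n, b1 j n * y^n

lemma F_hasSum (j : ℕ) {y : ℝ} (hy : |y| < 1) :
    HasSum (fun n => bE j n * y^n) (F j y) :=
  (summable_poly _ 1 j (abs_bE_le j) hy).hasSum

lemma F1_eq (j : ℕ) (y : ℝ) : (∑' n, bE j n * ((n:ℝ) * y^(n-1))) = F1 j y := by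
  unfold F1
  rw [tsum_shift (f := fun n => bE j n * ((n:ℝ) * y^(n-1))) (by simp)]
  congr 1
  funext n
  unfold b1
  simp only [Nat.add_sub_cancel]
  push_cast
  ring

lemma F_hasDerivAt (j : ℕ) {t : ℝ} (ht : |t| < 1) : HasDerivAt (F j) (F1 j t) t := by
  have h := hasDerivAt_tsum_poly (bE j) 1 j (abs_bE_le j) ht
  rw [F1_eq] at h
  exact h

lemma F1deriv_hasSum (j : ℕ) {t : ℝ} (ht : |t| < 1) :
    HasSum (fun n => b1 j n * ((n:ℝ) * t^(n-1))) (∑' n, b1 j n * ((n:ℝ) * t^(n-1))) :=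
  (summable_poly_deriv _ (2^j) (j+1) (abs_b1_le j) ht).hasSum

lemma F1_hasDerivAt (j : ℕ) {t : ℝ} (ht : |t| < 1) :
    HasDerivAt (F1 j) (∑' n, b1 j n * ((n:ℝ) * t^(n-1))) t :=
  hasDerivAt_tsum_poly (b1 j) (2^j) (j+1) (abs_b1_le j) ht

lemma term_identity (j n : ℕ) :
    bE j (n+2) * (((n:ℝ)+2)*((n:ℝ)+1)) * 1
    + bE j n * ((n:ℝ)*((n:ℝ)-1)) * 1 + 3*(n:ℝ)*bE j n * 1
    + 2*(j:ℝ)*bE (j-1) n * 1 - (j:ℝ)*((j:ℝ)-1)*bE (j-2) n * 1 = 0 := by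
  have h := E_rec j n
  unfold bE
  have h2 : (((n+2:ℕ)).factorial : ℝ) = ((n:ℝ)+2)*((n:ℝ)+1)*(n.factorial:ℝ) := by
    rw [Nat.factorial_succ (n+1), Nat.factorial_succ n]
    push_cast
    ring
  have hf : (n.factorial : ℝ) ≠ 0 := by positivity
  have e1 : E j (n+2) / (((n+2:ℕ)).factorial : ℝ) * (((n:ℝ)+2)*((n:ℝ)+1))
      = E j (n+2) / n.factorial := by
    rw [h2]
    field_simp
  rw [e1]
  field_simp
  linear_combination h

lemma main_lemma (j : ℕ) : ∀ t ∈ Set.Ioo (-1:ℝ) 1, HasSum (fun n => bE j n * t^n) (gfun j t) := by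
  induction j using Nat.strong_induction_on with
  | _ j ih =>
  have habs : ∀ t ∈ Set.Ioo (-1:ℝ) 1, |t| < 1 := fun t ht =>
    abs_lt.mpr ⟨by linarith [ht.1], ht.2⟩
  have hIH1 : ∀ t ∈ Set.Ioo (-1:ℝ) 1, 2*(j:ℝ) * F (j-1) t = 2*(j:ℝ) * gfun (j-1) t := by
    intro t ht
    rcases Nat.eq_zero_or_pos j with h | h
    · simp [h]
    · have h3 := (ih (j-1) (by omega) t ht).tsum_eq
      unfold F
      rw [h3]
  have hIH2 : ∀ t ∈ Set.Ioo (-1:ℝ) 1,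
      (j:ℝ)*((j:ℝ)-1) * F (j-2) t = (j:ℝ)*((j:ℝ)-1) * gfun (j-2) t := by
    intro t ht
    match j with
    | 0 => norm_num
    | 1 => norm_num
    | (jj+2) =>
      have h3 := (ih jj (by omega) t ht).tsum_eq
      unfold F
      simp only [Nat.add_sub_cancel]
      rw [h3]
  have hser : ∀ t ∈ Set.Ioo (-1:ℝ) 1,
      (1+t^2) * (∑' n, b1 j n * ((n:ℝ) * t^(n-1))) + 3*t*(F1 j t)
        + 2*(j:ℝ)*(F (j-1) t) - (j:ℝ)*((j:ℝ)-1)*(F (j-2) t) = 0 := by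
    intro t ht
    have htlt := habs t ht
    set F2t : ℝ := ∑' n, b1 j n * ((n:ℝ) * t^(n-1)) with hF2t
    have hS2raw : HasSum (fun n => b1 j n * ((n:ℝ) * t^(n-1))) F2t := F1deriv_hasSum j htlt
    have hα : HasSum (fun n => bE j (n+2) * (((n:ℝ)+2)*((n:ℝ)+1)) * t^n) F2t := by
      have h1 := (hasSum_nat_add_iff (f := fun n => b1 j n * ((n:ℝ) * t^(n-1))) 1).mpr
        (by
          have hz : (∑ i ∈ Finset.range 1, b1 j i * ((i:ℝ) * t^(i-1))) = 0 := by simp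
          rw [hz, add_zero]
          exact hS2raw)
      have heq : (fun n => b1 j (n+1) * (((n+1:ℕ):ℝ) * t^((n+1)-1)))
          = fun n => bE j (n+2) * (((n:ℝ)+2)*((n:ℝ)+1)) * t^n := by
        funext n
        unfold b1
        simp only [Nat.add_sub_cancel]
        push_cast
        ring
      rwa [heq] at h1
    have hβ : HasSum (fun n => bE j n * ((n:ℝ)*((n:ℝ)-1)) * t^n) (t^2 * F2t) := by
      have h1 := hS2raw.mul_left (t^2)
      have heq : (fun n => t^2 * (b1 j n * ((n:ℝ) * t^(n-1))))
          = fun n => (fun k => bE j k * ((k:ℝ)*((k:ℝ)-1)) * t^k) (n+1) := by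
        funext n
        unfold b1
        cases n with
        | zero => norm_num
        | succ nn =>
          simp only [Nat.add_sub_cancel]
          push_cast
          ring
      rw [heq] at h1
      have h2 := (hasSum_nat_add_iff (f := fun k => bE j k * ((k:ℝ)*((k:ℝ)-1)) * t^k) 1).mp h1
      simpa using h2
    have hγ : HasSum (fun (n:ℕ) => 3*(n:ℝ)*bE j n * t^n) (3*t*(F1 j t)) := by
      have h0 : HasSum (fun n => bE j n * ((n:ℝ) * t^(n-1))) (F1 j t) := by
        have hs := (summable_poly_deriv _ 1 j (abs_bE_le j) htlt).hasSum
        rwa [F1_eq] at hs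
      have h1 := h0.mul_left (3*t)
      have heq : (fun n => (3*t) * (bE j n * ((n:ℝ) * t^(n-1))))
          = fun (n:ℕ) => 3*(n:ℝ)*bE j n * t^n := by
        funext n
        cases n with
        | zero => norm_num
        | succ nn =>
          simp only [Nat.add_sub_cancel]
          push_cast
          ring
      rwa [heq] at h1
    have hδ1 : HasSum (fun n => 2*(j:ℝ)*bE (j-1) n * t^n) (2*(j:ℝ)*(F (j-1) t)) := by
      have h1 := (F_hasSum (j-1) htlt).mul_left (2*(j:ℝ))
      have heq : (fun n => (2*(j:ℝ)) * (bE (j-1) n * t^n))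
          = fun n => 2*(j:ℝ)*bE (j-1) n * t^n := by
        funext n; ring
      rwa [heq] at h1
    have hδ2 : HasSum (fun n => (j:ℝ)*((j:ℝ)-1)*bE (j-2) n * t^n)
        ((j:ℝ)*((j:ℝ)-1)*(F (j-2) t)) := by
      have h1 := (F_hasSum (j-2) htlt).mul_left ((j:ℝ)*((j:ℝ)-1))
      have heq : (fun n => ((j:ℝ)*((j:ℝ)-1)) * (bE (j-2) n * t^n))
          = fun n => (j:ℝ)*((j:ℝ)-1)*bE (j-2) n * t^n := by
        funext n; ring
      rwa [heq] at h1
    have htot := (((hα.add hβ).add hγ).add hδ1).sub hδ2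
    have hzero : (fun n => (bE j (n+2) * (((n:ℝ)+2)*((n:ℝ)+1)) * t^n
        + bE j n * ((n:ℝ)*((n:ℝ)-1)) * t^n + 3*(n:ℝ)*bE j n * t^n
        + 2*(j:ℝ)*bE (j-1) n * t^n) - (j:ℝ)*((j:ℝ)-1)*bE (j-2) n * t^n)
        = fun _ => (0:ℝ) := by
      funext n
      have hid := term_identity j n
      linear_combination (t^n) * hid
    rw [hzero] at htot
    have hval := htot.unique hasSum_zero
    linear_combination hval
  have hphi : ∀ t ∈ Set.Ioo (-1:ℝ) 1, F1 j t - G1 j t = 0 := by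
    have hφode : ∀ t ∈ Set.Ioo (-1:ℝ) 1,
        (1+t^2) * ((∑' n, b1 j n * ((n:ℝ) * t^(n-1))) - G2 j t)
          + 3*t*(F1 j t - G1 j t) = 0 := by
      intro t ht
      have h1 := hser t ht
      have h2 := g_ode j t
      have h3 := hIH1 t ht
      have h4 := hIH2 t ht
      linear_combination h1 - h2 - h3 + h4
    have hψ' : ∀ t ∈ Set.Ioo (-1:ℝ) 1,
        HasDerivAt (fun y => (1+y^2) * rr y * (F1 j y - G1 j y)) 0 t := by
      intro t ht
      have hA : HasDerivAt (fun y : ℝ => (1+y^2) * rr y)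
          (2*t * rr t + (1+t^2) * (t / rr t)) t := by
        have h1 : HasDerivAt (fun y : ℝ => 1 + y^2) (2*t) t := by
          simpa using ((hasDerivAt_pow 2 t).const_add 1)
        exact h1.mul (hasDerivAt_rr t)
      have hB := (F1_hasDerivAt j (habs t ht)).sub (hasDerivAt_G1 j t)
      have h2 := hA.mul hB
      refine h2.congr_deriv ?_
      have hode := hφode t ht
      have hr2 := rr_sq t
      have h0 := (rr_pos t).ne'
      simp only [Pi.sub_apply]
      generalize (∑' n, b1 j n * ((n:ℝ) * t^(n-1))) = S at hode ⊢
      field_simp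
      linear_combination ((rr t)*(rr t)) * hode - (t*(F1 j t - G1 j t)) * hr2
    have hφ0 : F1 j 0 - G1 j 0 = 0 := by
      have hF10 : F1 j 0 = b1 j 0 := by
        unfold F1
        have heq : (fun n => b1 j n * (0:ℝ)^n) = fun n => if n = 0 then b1 j 0 else 0 := by
          funext n
          cases n with
          | zero => simp
          | succ nn => simp
        rw [heq, tsum_ite_eq]
      have hb10 : b1 j 0 = (j.factorial:ℝ) * (A 1).coeff j := by
        unfold b1 bE E
        simp
      have hA1 : ∀ jj, (A 1).coeff jj
          = (if jj = 0 then (-1:ℝ) else if jj = 1 then 1 else 0) := by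
        intro jj
        rw [A_one]
        match jj with
        | 0 => simp [Polynomial.coeff_one]
        | 1 => simp [Polynomial.coeff_one]
        | (x+2) => simp [Polynomial.coeff_X, Polynomial.coeff_C, Polynomial.coeff_one]
      have harc0 : Real.arsinh 0 = 0 := Real.arsinh_zero
      have hrr0 : rr 0 = 1 := by
        unfold rr; norm_num
      have hpp0 : pp 0 = 1 := by
        unfold pp; rw [hrr0]; norm_num
      rw [hF10, hb10, hA1]
      unfold G1
      rw [harc0, hrr0, hpp0]
      match j with
      | 0 => norm_num
      | 1 => norm_num
      | (x+2) => simp [zero_pow]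
    intro t ht
    have hψconst := const_of_deriv_zero_Ioo hψ' ht
    have hr0 : rr 0 = 1 := by unfold rr; norm_num
    have hz : (1+t^2) * rr t * (F1 j t - G1 j t) = 0 := by
      rw [hψconst, hr0, hφ0]
      ring
    have hne : (1+t^2) * rr t ≠ 0 := by
      have := rr_pos t
      positivity
    exact (mul_eq_zero.mp hz).resolve_left hne
  have hmain : ∀ t ∈ Set.Ioo (-1:ℝ) 1, F j t = gfun j t := by
    intro t ht
    have hh' : ∀ y ∈ Set.Ioo (-1:ℝ) 1, HasDerivAt (fun z => F j z - gfun j z) 0 y := by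
      intro y hy
      have h1 := (F_hasDerivAt j (habs y hy)).sub (hasDerivAt_gfun j y)
      rwa [show F1 j y - G1 j y = 0 from hphi y hy] at h1
    have hconst := const_of_deriv_zero_Ioo hh' ht
    have h00 : F j 0 - gfun j 0 = 0 := by
      have hF0 : F j 0 = bE j 0 := by
        unfold F
        have heq : (fun n => bE j n * (0:ℝ)^n) = fun n => if n = 0 then bE j 0 else 0 := by
          funext n
          cases n with
          | zero => simp
          | succ nn => simp
        rw [heq, tsum_ite_eq]
      have hbE0 : bE j 0 = (if j = 0 then (1:ℝ) else 0) := by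
        unfold bE E
        rw [A_zero]
        cases j with
        | zero => simp
        | succ jj => simp [Polynomial.coeff_one]
      have hrr0 : rr 0 = 1 := by unfold rr; norm_num
      have hpp0 : pp 0 = 1 := by unfold pp; rw [hrr0]; norm_num
      rw [hF0, hbE0]
      unfold gfun
      rw [Real.arsinh_zero, hpp0]
      cases j with
      | zero => norm_num
      | succ jj => simp [zero_pow]
    have := hconst
    linarith [hconst, h00]
  intro t ht
  have hs := F_hasSum j (habs t ht)
  rwa [hmain t ht] at hs



noncomputable def bT (mm n : ℕ) : ℝ := if n = 0 then 0 else E mm (n-1) / n.factorial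

lemma abs_bT_le (mm : ℕ) : ∀ n, |bT mm n| ≤ 1 * ((n:ℝ)+1)^mm := by
  intro n
  rw [one_mul]
  unfold bT
  cases n with
  | zero =>
    simp
  | succ nn =>
    rw [if_neg (Nat.succ_ne_zero nn)]
    simp only [Nat.add_sub_cancel]
    rw [abs_div, abs_of_nonneg (a := (((nn+1).factorial:ℕ):ℝ)) (by positivity),
      div_le_iff₀ (by positivity)]
    calc |E mm nn| ≤ ((nn:ℝ)+1)^mm * (nn.factorial:ℝ) := abs_E_le mm nn
      _ ≤ (((nn+1:ℕ):ℝ)+1)^mm * ((nn+1).factorial:ℝ) := by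
          apply mul_le_mul
          · apply pow_le_pow_left₀ (by positivity)
            push_cast
            linarith
          · rw [Nat.factorial_succ]
            push_cast
            nlinarith [Nat.cast_nonneg (α := ℝ) nn.factorial,
              Nat.one_le_iff_ne_zero.mpr (Nat.factorial_ne_zero nn),
              (by exact_mod_cast Nat.one_le_iff_ne_zero.mpr (Nat.factorial_ne_zero nn) :
                (1:ℝ) ≤ (nn.factorial:ℝ))]
          · positivity
          · positivity

noncomputable def T (mm : ℕ) (y : ℝ) : ℝ := ∑' n, bT mm n * y^n

lemma T_hasSum (mm : ℕ) {y : ℝ} (hy : |y| < 1) :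
    HasSum (fun n => bT mm n * y^n) (T mm y) :=
  (summable_poly _ 1 mm (abs_bT_le mm) hy).hasSum

lemma T_hasDerivAt (mm : ℕ) {t : ℝ} (ht : |t| < 1) : HasDerivAt (T mm) (F mm t) t := by
  have h := hasDerivAt_tsum_poly (bT mm) 1 mm (abs_bT_le mm) ht
  have heq : (∑' n, bT mm n * ((n:ℝ)*t^(n-1))) = F mm t := by
    rw [tsum_shift (f := fun n => bT mm n * ((n:ℝ)*t^(n-1))) (by simp)]
    unfold F
    congr 1
    funext n
    unfold bT bE E
    rw [if_neg (Nat.succ_ne_zero n)]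
    simp only [Nat.add_sub_cancel]
    rw [Nat.factorial_succ]
    have h1 : (n.factorial : ℝ) ≠ 0 := by positivity
    push_cast
    field_simp
  rwa [heq] at h

lemma exp_neg_arsinh (t : ℝ) : Real.exp (-(Real.arsinh t)) = rr t - t := by
  have h1 : (t + rr t) * (rr t - t) = 1 := by
    have := rr_sq t
    linear_combination this
  rw [Real.exp_neg, Real.exp_arsinh]
  exact inv_eq_of_mul_eq_one_right h1

noncomputable def Phi (mm : ℕ) (t : ℝ) : ℝ :=
  ∫ s in (0:ℝ)..(Real.arsinh t), Real.exp (-s) * s^mm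

lemma Phi_hasDerivAt (mm : ℕ) (t : ℝ) : HasDerivAt (Phi mm) (gfun mm t) t := by
  have hcont : Continuous (fun s : ℝ => Real.exp (-s) * s^mm) := by
    exact (Real.continuous_exp.comp continuous_neg).mul (continuous_pow mm)
  have hFTC : HasDerivAt (fun y => ∫ s in (0:ℝ)..y, Real.exp (-s) * s^mm)
      (Real.exp (-(Real.arsinh t)) * (Real.arsinh t)^mm) (Real.arsinh t) :=
    intervalIntegral.integral_hasDerivAt_right (hcont.intervalIntegrable _ _)
      (hcont.stronglyMeasurableAtFilter _ _) hcont.continuousAt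
  have hcomp := HasDerivAt.comp t hFTC (hasDerivAt_arsinh' t)
  refine hcomp.congr_deriv ?_
  rw [exp_neg_arsinh]
  unfold gfun pp
  have h0 := (rr_pos t).ne'
  field_simp

lemma integrableOn_Ioi0 (mm : ℕ) :
    MeasureTheory.IntegrableOn (fun s : ℝ => Real.exp (-s) * s^mm) (Set.Ioi 0) := by
  have h := Real.GammaIntegral_convergent (s := (mm:ℝ)+1) (by positivity)
  refine h.congr_fun (fun x hx => ?_) measurableSet_Ioi
  have hx0 : (0:ℝ) ≤ x := le_of_lt hx
  simp only [show ((mm:ℝ)+1)-1 = (mm:ℝ) by ring, Real.rpow_natCast]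

lemma integral_Ioi0 (mm : ℕ) :
    ∫ s in Set.Ioi (0:ℝ), Real.exp (-s) * s^mm = (mm.factorial : ℝ) := by
  have h2 : Real.Gamma ((mm:ℝ)+1) = (mm.factorial : ℝ) := Real.Gamma_nat_eq_factorial mm
  calc ∫ s in Set.Ioi (0:ℝ), Real.exp (-s) * s^mm
      = ∫ s in Set.Ioi (0:ℝ), Real.exp (-s) * s^(((mm:ℝ)+1)-1) := by
        refine MeasureTheory.setIntegral_congr_fun measurableSet_Ioi (fun x hx => ?_)
        rw [show ((mm:ℝ)+1)-1 = (mm:ℝ) by ring, Real.rpow_natCast]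
    _ = Real.Gamma ((mm:ℝ)+1) := (Real.Gamma_eq_integral (by positivity)).symm
    _ = (mm.factorial : ℝ) := h2

lemma incGamma_eq (mm : ℕ) (x : ℝ) :
    incGamma (1+mm) x = (mm.factorial : ℝ) - ∫ s in (0:ℝ)..x, Real.exp (-s) * s^mm := by
  have hcont : Continuous (fun s : ℝ => Real.exp (-s) * s^mm) :=
    (Real.continuous_exp.comp continuous_neg).mul (continuous_pow mm)
  have hIoi0 := integrableOn_Ioi0 mm
  have hmm : 1 + mm - 1 = mm := by omega
  unfold incGamma
  rw [hmm]
  have hI0 := integral_Ioi0 mm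
  rcases le_or_gt 0 x with h | h
  · have hunion : Set.Ioc (0:ℝ) x ∪ Set.Ioi x = Set.Ioi 0 := Set.Ioc_union_Ioi_eq_Ioi h
    have hdisj : Disjoint (Set.Ioc (0:ℝ) x) (Set.Ioi x) := by
      rw [Set.disjoint_left]
      intro y hy1 hy2
      rw [Set.mem_Ioc] at hy1
      rw [Set.mem_Ioi] at hy2
      linarith [hy1.2]
    have hsum := MeasureTheory.setIntegral_union hdisj measurableSet_Ioi
      (hIoi0.mono_set (by rw [← hunion]; exact Set.subset_union_left))
      (hIoi0.mono_set (by rw [← hunion]; exact Set.subset_union_right))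
    rw [hunion, hI0] at hsum
    rw [intervalIntegral.integral_of_le h]
    linarith [hsum]
  · have hx : x ≤ 0 := le_of_lt h
    have hunion : Set.Ioc x 0 ∪ Set.Ioi 0 = Set.Ioi x := Set.Ioc_union_Ioi_eq_Ioi hx
    have hIoc : MeasureTheory.IntegrableOn (fun s : ℝ => Real.exp (-s) * s^mm)
        (Set.Ioc x 0) :=
      ((hcont.continuousOn).integrableOn_Icc).mono_set Set.Ioc_subset_Icc_self
    have hdisj : Disjoint (Set.Ioc x (0:ℝ)) (Set.Ioi 0) := by
      rw [Set.disjoint_left]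
      intro y hy1 hy2
      rw [Set.mem_Ioc] at hy1
      rw [Set.mem_Ioi] at hy2
      linarith [hy1.2]
    have hsum := MeasureTheory.setIntegral_union hdisj measurableSet_Ioi hIoc hIoi0
    rw [hunion, hI0] at hsum
    rw [hsum]
    rw [intervalIntegral.integral_symm, intervalIntegral.integral_of_le hx]
    ring

end IG

theorem incGamma_succ_arsinh (m : ℕ) (hm : 3 ≤ m) (t : ℝ) (ht : |t| < 1) :
    ∃ S : ℝ,
      HasSum (fun k : ℕ =>
        Q (m + 1) (k + m - m) 3 * (2 * t) ^ (k + m + 1) / ((k + m + 1).factorial : ℝ)) S ∧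
      incGamma (1 + m) (Real.arsinh t) =
        (m.factorial : ℝ) - (m.factorial : ℝ) / 2 ^ (m + 1) * S := by
  classical
  have htmem : t ∈ Set.Ioo (-1:ℝ) 1 := ⟨(abs_lt.mp ht).1, (abs_lt.mp ht).2⟩
  have hTsum : HasSum (fun n => IG.bT m n * t^n) (IG.T m t) := IG.T_hasSum m ht
  have hzero_init : (∑ i ∈ Finset.range (m+1), IG.bT m i * t^i) = 0 := by
    apply Finset.sum_eq_zero
    intro i hi
    rw [Finset.mem_range] at hi
    match i, hi with
    | 0, _ => simp [IG.bT]
    | (ii+1), hii =>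
      have hco : (IG.A ii).coeff m = 0 :=
        Polynomial.coeff_eq_zero_of_natDegree_lt
          (lt_of_le_of_lt (IG.natDegree_A_le _) (by omega))
      unfold IG.bT IG.E
      rw [if_neg (Nat.succ_ne_zero ii)]
      simp only [Nat.add_sub_cancel]
      rw [hco]
      simp
  have h1 := (hasSum_nat_add_iff (f := fun n => IG.bT m n * t^n) (m+1)).mpr
    (by rw [hzero_init, add_zero]; exact hTsum)
  have h2 := h1.mul_left ((2:ℝ)^(m+1) / (m.factorial:ℝ))
  have heq : (fun k => ((2:ℝ)^(m+1)/(m.factorial:ℝ)) * (IG.bT m (k+(m+1)) * t^(k+(m+1))))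
      = fun k => Q (m + 1) (k + m - m) 3 * (2 * t) ^ (k + m + 1) / ((k + m + 1).factorial : ℝ) := by
    funext k
    have hkm : k + m - m = k := by omega
    rw [hkm]
    have hbT : IG.bT m (k+(m+1)) = IG.E m (k+m) / (((k+m+1).factorial : ℕ) : ℝ) := by
      unfold IG.bT
      rw [if_neg (by omega)]
      have e1 : k + (m+1) - 1 = k + m := by omega
      have e2 : k + (m+1) = k + m + 1 := by omega
      rw [e1, e2]
    rw [hbT]
    have hE : IG.E m (k+m) = (m.factorial:ℝ) * ((IG.A (m+k)).coeff m) := by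
      unfold IG.E
      rw [Nat.add_comm k m]
    rw [hE, IG.A_coeff_eq_Q m k]
    have hfm : (m.factorial:ℝ) ≠ 0 := by positivity
    have hfkm : (((k+m+1).factorial : ℕ):ℝ) ≠ 0 := by positivity
    have hexp : k + (m+1) = k+m+1 := by omega
    rw [hexp, mul_pow]
    field_simp
    ring
  rw [heq] at h2
  refine ⟨(2:ℝ)^(m+1)/(m.factorial:ℝ) * IG.T m t, h2, ?_⟩
  have hTPhi : IG.T m t = IG.Phi m t := by
    have hd : ∀ y ∈ Set.Ioo (-1:ℝ) 1, HasDerivAt (fun z => IG.T m z - IG.Phi m z) 0 y := by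
      intro y hy
      have hylt : |y| < 1 := abs_lt.mpr ⟨by linarith [hy.1], hy.2⟩
      have hder := (IG.T_hasDerivAt m hylt).sub (IG.Phi_hasDerivAt m y)
      have h3 : IG.F m y = IG.gfun m y := (IG.main_lemma m y hy).tsum_eq
      rwa [h3, sub_self] at hder
    have hconst := IG.const_of_deriv_zero_Ioo hd htmem
    have hT0 : IG.T m 0 = 0 := by
      unfold IG.T
      have heq0 : (fun n => IG.bT m n * (0:ℝ)^n) = fun n => if n = 0 then 0 else 0 := by
        funext n
        cases n with
        | zero => simp [IG.bT]
        | succ nn => simp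
      rw [heq0]
      simp
    have hP0 : IG.Phi m 0 = 0 := by
      unfold IG.Phi
      rw [Real.arsinh_zero, intervalIntegral.integral_same]
    rw [hT0, hP0] at hconst
    linarith [hconst]
  rw [IG.incGamma_eq m (Real.arsinh t)]
  have hsimp : (m.factorial:ℝ)/2^(m+1) * ((2:ℝ)^(m+1)/(m.factorial:ℝ) * IG.T m t)
      = IG.T m t := by
    have hfm : (m.factorial:ℝ) ≠ 0 := by positivity
    field_simp
  rw [hsimp, hTPhi]
  rfl
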